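/- arXiv:1410.5734 — 4 statements merged into one kernel-verified Lean document; each statement's English description precedes it below -/
import Mathlib

section
/- Let $X$ be a square-integrable random variable on a product probability space $\Omega = \prod_{j \in J} E_j$ (with $J$ finite), so that the coordinates $a(j)$ are independent. Then $\mathrm{Var}(X) \geq \sum_{j \in J} \mathrm{Var}\big(\mathbb{E}[X \mid a(j)]\big)$. -/
open MeasureTheory ProbabilityTheory

section aux

variable {α : Type*} {m m0 : MeasurableSpace α} {μ : Measure α}

lemma aux_memℒp_two_condexp (hm : m ≤ m0) (μ : Measure α) [IsProbabilityMeasure μ]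
    {f : α → ℝ} (hf : MemLp f 2 μ) : MemLp (μ[f|m]) 2 μ := by
  have hfi : Integrable f μ := hf.integrable one_le_two
  have hg2 : MemLp ((condExpL2 ℝ ℝ hm (hf.toLp f) : α →₂[μ] ℝ) : α → ℝ) 2 μ := Lp.memLp _
  have h : ((condExpL2 ℝ ℝ hm (hf.toLp f) : α →₂[μ] ℝ) : α → ℝ) =ᵐ[μ] μ[f|m] := by
    refine ae_eq_condExp_of_forall_setIntegral_eq hm hfi
      (fun s _ _ => (hg2.integrable one_le_two).integrableOn)
      (fun s hs hμs => ?_) (aestronglyMeasurable_condExpL2 hm _)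
    rw [integral_condExpL2_eq hm (hf.toLp f) hs hμs.ne]
    exact setIntegral_congr_ae (hm s hs) ((hf.coeFn_toLp).mono fun x hx _ => hx)
  exact hg2.ae_eq h

end aux

section indep

variable {J : Type*} [Fintype J] {E : J → Type*}
    [∀ j, MeasurableSpace (E j)] (μ : ∀ j, Measure (E j))
    [∀ j, IsProbabilityMeasure (μ j)]

lemma aux_eval_preimage (i : J) {s : Set (E i)} (_hs : MeasurableSet s) :
    Measure.pi μ ((fun a : ∀ j, E j => a i) ⁻¹' s) = μ i s := by
  classical
  have : (fun a : ∀ j, E j => a i) ⁻¹' s = Set.pi Set.univ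
      (Function.update (fun j => (Set.univ : Set (E j))) i s) := by
    rw [Set.univ_pi_update_univ]
  rw [this, Measure.pi_pi]
  rw [Finset.prod_eq_single i (fun j _ hj => by rw [Function.update_of_ne hj]; simp)
    (fun h => absurd (Finset.mem_univ i) h)]
  simp

lemma aux_indep_eval {i j : J} (hij : i ≠ j) :
    Indep (MeasurableSpace.comap (fun a : ∀ k, E k => a i) inferInstance)
      (MeasurableSpace.comap (fun a : ∀ k, E k => a j) inferInstance) (Measure.pi μ) := by
  classical
  rw [← IndepFun_iff_Indep]
  rw [indepFun_iff_measure_inter_preimage_eq_mul]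
  intro s t hs ht
  rw [aux_eval_preimage μ i hs, aux_eval_preimage μ j ht]
  have hset : (fun a : ∀ k, E k => a i) ⁻¹' s ∩ (fun a : ∀ k, E k => a j) ⁻¹' t =
      Set.pi Set.univ
        (Function.update (Function.update (fun k => (Set.univ : Set (E k))) i s) j t) := by
    ext a
    simp only [Set.mem_inter_iff, Set.mem_preimage, Set.mem_univ_pi]
    constructor
    · rintro ⟨h1, h2⟩ k
      by_cases hkj : k = j
      · subst hkj; rw [Function.update_self]; exact h2
      · rw [Function.update_of_ne hkj]
        by_cases hki : k = i
        · subst hki; rw [Function.update_self]; exact h1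
        · rw [Function.update_of_ne hki]; trivial
    · intro h
      constructor
      · have := h i
        rwa [Function.update_of_ne hij, Function.update_self] at this
      · have := h j
        rwa [Function.update_self] at this
  rw [hset, Measure.pi_pi]
  have hval : ∀ k, μ k (Function.update (Function.update
      (fun k => (Set.univ : Set (E k))) i s) j t k) =
      (if k = i then μ i s else 1) * (if k = j then μ j t else 1) := by
    intro k
    by_cases hkj : k = j
    · subst hkj
      rw [Function.update_self, if_neg (Ne.symm hij), if_pos rfl, one_mul]
    · rw [Function.update_of_ne hkj, if_neg hkj, mul_one]
      by_cases hki : k = i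
      · subst hki; rw [Function.update_self, if_pos rfl]
      · rw [Function.update_of_ne hki, if_neg hki]; simp
  rw [Finset.prod_congr rfl (fun k _ => hval k), Finset.prod_mul_distrib]
  rw [Finset.prod_ite_eq' Finset.univ i (fun _ => μ i s),
    Finset.prod_ite_eq' Finset.univ j (fun _ => μ j t)]
  simp

end indep

theorem stmt0 {J : Type*} [Fintype J] {E : J → Type*}
    [∀ j, MeasurableSpace (E j)] (μ : ∀ j, Measure (E j))
    [∀ j, IsProbabilityMeasure (μ j)]
    (X : (∀ j, E j) → ℝ) (hX : MemLp X 2 (Measure.pi μ)) :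
    ∑ j : J,
        variance ((Measure.pi μ)[X | MeasurableSpace.comap (fun a => a j) inferInstance])
          (Measure.pi μ)
      ≤ variance X (Measure.pi μ) := by
  classical
  set ν := Measure.pi μ with hν
  set m : J → MeasurableSpace (∀ j, E j) :=
    fun j => MeasurableSpace.comap (fun a => a j) inferInstance with hmdef
  have hm : ∀ j, m j ≤ MeasurableSpace.pi := fun j => (measurable_pi_apply j).comap_le
  set Y : J → (∀ j, E j) → ℝ := fun j => ν[X | m j] with hYdef
  have hXi : Integrable X ν := hX.integrable one_le_two
  have hY2 : ∀ j, MemLp (Y j) 2 ν := fun j => aux_memℒp_two_condexp (hm j) ν hX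
  have hYi : ∀ j, Integrable (Y j) ν := fun j => integrable_condExp
  -- mean of Y j
  set c : ℝ := ∫ a, X a ∂ν with hc
  have hYmean : ∀ j, ∫ a, Y j a ∂ν = c := fun j => integral_condExp (hm j) (f := X)
  -- key identity: ∫ Y j * X = ∫ (Y j)^2
  have hmulint : ∀ j, Integrable (fun a => Y j a * X a) ν := by
    intro j
    have := ((hX.smul (hY2 j) (r := 1)) : MemLp (Y j • X) 1 ν)
    exact memLp_one_iff_integrable.mp this
  have key : ∀ j, ∫ a, Y j a * X a ∂ν = ∫ a, Y j a * Y j a ∂ν := by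
    intro j
    have hint : Integrable (Y j * X) ν := hmulint j
    have hmul := condExp_mul_of_stronglyMeasurable_left (μ := ν) (m := m j)
      (stronglyMeasurable_condExp (f := X)) hint hXi
    calc ∫ a, Y j a * X a ∂ν = ∫ a, (Y j * X) a ∂ν := rfl
      _ = ∫ a, (ν[Y j * X | m j]) a ∂ν := (integral_condExp (hm j) (f := Y j * X)).symm
      _ = ∫ a, (Y j * ν[X | m j]) a ∂ν := integral_congr_ae hmul
      _ = ∫ a, Y j a * Y j a ∂ν := rfl
  -- independence of the Y's
  have hind : ∀ i j, i ≠ j → IndepFun (Y i) (Y j) ν := by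
    intro i j hij
    rw [IndepFun_iff_Indep]
    have h1 : MeasurableSpace.comap (Y i) inferInstance ≤ m i :=
      (stronglyMeasurable_condExp (f := X)).measurable.comap_le
    have h2 : MeasurableSpace.comap (Y j) inferInstance ≤ m j :=
      (stronglyMeasurable_condExp (f := X)).measurable.comap_le
    exact indep_of_indep_of_le_right (indep_of_indep_of_le_left (aux_indep_eval μ hij) h1) h2
  -- sum of the Y's
  set T : (∀ j, E j) → ℝ := ∑ j : J, Y j with hT
  have hT2 : MemLp T 2 ν := memLp_finset_sum' _ (fun j _ => hY2 j)
  have hTi : Integrable T ν := hT2.integrable one_le_two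
  have hVarT : variance T ν = ∑ j, variance (Y j) ν :=
    IndepFun.variance_sum (fun j _ => hY2 j)
      (fun i _ j _ hij => hind i j hij)
  set S : ℝ := ∑ j, variance (Y j) ν with hS
  set n : ℝ := (Fintype.card J : ℝ) with hn
  have hTmean : ∫ a, T a ∂ν = n * c := by
    have : ∀ a, T a = ∑ j, Y j a := fun a => by rw [hT]; simp [Finset.sum_apply]
    rw [integral_congr_ae (Filter.Eventually.of_forall this),
      integral_finset_sum _ (fun j _ => hYi j)]
    simp [hYmean, hn, Finset.card_univ, mul_comm]
  have hVarY : ∀ j, variance (Y j) ν = ∫ a, (Y j a) ^ 2 ∂ν - c ^ 2 := by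
    intro j
    rw [variance_eq_sub (hY2 j), hYmean j]
    rfl
  have hXTint : Integrable (fun a => X a * T a) ν := by
    have : ∀ a, X a * T a = ∑ j, Y j a * X a := by
      intro a; rw [hT]; simp [Finset.sum_apply, Finset.sum_mul]; rw [Finset.mul_sum]
      exact Finset.sum_congr rfl (fun j _ => mul_comm _ _)
    rw [show (fun a => X a * T a) = fun a => ∑ j, Y j a * X a from funext this]
    exact integrable_finset_sum _ (fun j _ => hmulint j)
  have hXT : ∫ a, X a * T a ∂ν = S + n * c ^ 2 := by
    have h1 : ∀ a, X a * T a = ∑ j, Y j a * X a := by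
      intro a; rw [hT]; simp [Finset.sum_apply]; rw [Finset.mul_sum]
      exact Finset.sum_congr rfl (fun j _ => mul_comm _ _)
    rw [integral_congr_ae (Filter.Eventually.of_forall h1),
      integral_finset_sum _ (fun j _ => hmulint j)]
    have h2 : ∀ j, ∫ a, Y j a * X a ∂ν = variance (Y j) ν + c ^ 2 := by
      intro j
      rw [key j, hVarY j]
      have : ∀ a, Y j a * Y j a = (Y j a) ^ 2 := fun a => (sq (Y j a)).symm
      rw [integral_congr_ae (Filter.Eventually.of_forall this)]
      ring
    rw [Finset.sum_congr rfl (fun j _ => h2 j), Finset.sum_add_distrib]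
    simp [hS, hn, Finset.card_univ]
  have hT2int : ∫ a, T a ^ 2 ∂ν = S + (n * c) ^ 2 := by
    have := variance_eq_sub hT2
    rw [hVarT] at this
    have hint : (ν[T] : ℝ) = n * c := hTmean
    have hsq : (ν[T ^ 2] : ℝ) = ∫ a, T a ^ 2 ∂ν := rfl
    rw [hint, hsq] at this
    linarith
  have hX2 : ∫ a, X a ^ 2 ∂ν = variance X ν + c ^ 2 := by
    have := variance_eq_sub hX
    have hsq : (ν[X ^ 2] : ℝ) = ∫ a, X a ^ 2 ∂ν := rfl
    rw [hsq, ← hc] at this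
    linarith
  -- expand variance of X - T
  have h0 : 0 ≤ variance (X - T) ν := variance_nonneg _ _
  rw [variance_eq_sub (hX.sub hT2)] at h0
  have hsubmean : (ν[X - T] : ℝ) = c - n * c := by
    have : (ν[X - T] : ℝ) = ∫ a, (X a - T a) ∂ν := rfl
    rw [this, integral_sub hXi hTi, hTmean, ← hc]
  have hsubsq : (ν[(X - T) ^ 2] : ℝ) =
      ∫ a, X a ^ 2 ∂ν - 2 * ∫ a, X a * T a ∂ν + ∫ a, T a ^ 2 ∂ν := by
    have h1 : ∀ a, ((X - T) ^ 2) a = X a ^ 2 - 2 * (X a * T a) + T a ^ 2 := by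
      intro a; simp [Pi.sub_apply]; ring
    have : (ν[(X - T) ^ 2] : ℝ) =
        ∫ a, (X a ^ 2 - 2 * (X a * T a) + T a ^ 2) ∂ν :=
      integral_congr_ae (Filter.Eventually.of_forall h1)
    have hf1 : Integrable (fun a => X a ^ 2 - 2 * (X a * T a)) ν :=
      (hX.integrable_sq).sub (hXTint.const_mul 2)
    calc (ν[(X - T) ^ 2] : ℝ)
        = ∫ a, (X a ^ 2 - 2 * (X a * T a) + T a ^ 2) ∂ν := this
      _ = (∫ a, (X a ^ 2 - 2 * (X a * T a)) ∂ν) + ∫ a, T a ^ 2 ∂ν :=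
          integral_add hf1 hT2.integrable_sq
      _ = ((∫ a, X a ^ 2 ∂ν) - ∫ a, 2 * (X a * T a) ∂ν) + ∫ a, T a ^ 2 ∂ν := by
          rw [integral_sub hX.integrable_sq (hXTint.const_mul 2)]
      _ = ∫ a, X a ^ 2 ∂ν - 2 * ∫ a, X a * T a ∂ν + ∫ a, T a ^ 2 ∂ν := by
          rw [MeasureTheory.integral_const_mul]
  rw [hsubmean, hsubsq, hX2, hXT, hT2int] at h0
  have : S ≤ variance X ν := by nlinarith [h0]
  exact this
end

section
/- Define recursively functions $\psi_{k,\mu} : [0,\infty) \to [0,\infty)$ for $\mu > 0$ by $\psi_{1,\mu}(\nu) = 1/(\mu + \nu)$ and $\psi_{k+1,\mu}(\nu) = \frac{1}{2^k - 1}\big( 2^k \psi_{k, \mu/2}(\nu) - \psi_{k,\mu}(\nu) \big)$. Then for every $k \geq 1$ there exists a homogeneous polynomial $p_k(\mu,\nu) = \sum_{j=0}^{k-1} a_j \mu^j \nu^{k-1-j}$ of total degree $k-1$ such that for all $\mu > 0$, $\nu \geq 0$: $\partial_\mu \psi_{k,\mu}(\nu) = \mu^{k-1} \, p_k(\mu,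 \nu) \, / \, \prod_{i=0}^{k-1}(2^{-i}\mu + \nu)^2$. -/
open Finset

lemma key_shift (n : ℕ) (a A : ℕ → ℝ) (r : ℝ)
    (h0 : A 0 = a 0) (ha : ∀ j, n + 1 ≤ j → a j = 0) (hA : ∀ j, n + 1 ≤ j → A j = 0) :
    ∃ b : ℕ → ℝ, (∀ j, n + 2 ≤ j → b j = 0) ∧ ∀ μ ν : ℝ,
      μ * ∑ j ∈ range (n + 2), b j * μ ^ j * ν ^ (n + 1 - j) =
        (μ + ν) ^ 2 * ∑ j ∈ range (n + 1), A j * μ ^ j * ν ^ (n - j)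
        - (r * μ + ν) ^ 2 * ∑ j ∈ range (n + 1), a j * μ ^ j * ν ^ (n - j) := by
  refine ⟨fun j => (A (j+1) - a (j+1)) + (2*A j - 2*r*a j) +
    (if j = 0 then 0 else (A (j-1) - r^2 * a (j-1))), ?_, ?_⟩
  · intro j hj
    simp only [ha (j+1) (by omega), hA (j+1) (by omega), ha j (by omega), hA j (by omega),
      ha (j-1) (by omega), hA (j-1) (by omega), if_neg (show ¬ j = 0 by omega)]
    ring
  intro μ ν
  have hRHS : (μ + ν) ^ 2 * ∑ j ∈ range (n + 1), A j * μ ^ j * ν ^ (n - j)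
        - (r * μ + ν) ^ 2 * ∑ j ∈ range (n + 1), a j * μ ^ j * ν ^ (n - j)
      = (∑ j ∈ range (n + 1), (A j - a j) * μ ^ j * ν ^ (n + 2 - j))
        + (∑ j ∈ range (n + 1), (2*A j - 2*r*a j) * μ ^ (j+1) * ν ^ (n + 1 - j))
        + (∑ j ∈ range (n + 1), (A j - r^2 * a j) * μ ^ (j+2) * ν ^ (n - j)) := by
    rw [Finset.mul_sum, Finset.mul_sum, ← Finset.sum_sub_distrib, ← Finset.sum_add_distrib,
      ← Finset.sum_add_distrib]
    refine Finset.sum_congr rfl fun j hj => ?_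
    have hj' : j ≤ n := by simpa using Nat.lt_succ_iff.mp (Finset.mem_range.mp hj)
    rw [show n + 2 - j = (n - j) + 2 by omega, show n + 1 - j = (n - j) + 1 by omega,
      pow_add, pow_add]
    ring
  have hLHS : μ * ∑ j ∈ range (n + 2), ((A (j+1) - a (j+1)) + (2*A j - 2*r*a j) +
      (if j = 0 then 0 else (A (j-1) - r^2 * a (j-1)))) * μ ^ j * ν ^ (n + 1 - j)
      = (∑ j ∈ range (n + 2), (A (j+1) - a (j+1)) * μ ^ (j+1) * ν ^ (n + 1 - j))
        + (∑ j ∈ range (n + 2), (2*A j - 2*r*a j) * μ ^ (j+1) * ν ^ (n + 1 - j))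
        + (∑ j ∈ range (n + 2), (if j = 0 then 0 else (A (j-1) - r^2 * a (j-1)))
            * μ ^ (j+1) * ν ^ (n + 1 - j)) := by
    rw [Finset.mul_sum, ← Finset.sum_add_distrib, ← Finset.sum_add_distrib]
    refine Finset.sum_congr rfl fun j hj => ?_
    ring
  rw [hLHS, hRHS]
  have e1 : (∑ j ∈ range (n + 2), (A (j+1) - a (j+1)) * μ ^ (j+1) * ν ^ (n + 1 - j))
      = ∑ j ∈ range (n + 1), (A j - a j) * μ ^ j * ν ^ (n + 2 - j) := by
    rw [Finset.sum_range_succ, Finset.sum_range_succ, ha _ (by omega), hA _ (by omega),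
      ha _ (by omega), hA _ (by omega)]
    rw [show (∑ j ∈ range (n + 1), (A j - a j) * μ ^ j * ν ^ (n + 2 - j))
      = ∑ j ∈ range n, (A (j+1) - a (j+1)) * μ ^ (j+1) * ν ^ (n + 2 - (j+1)) + (A 0 - a 0) * μ ^ 0 * ν ^ (n + 2 - 0)
      from Finset.sum_range_succ' _ n]
    rw [h0]
    simp only [Nat.succ_sub_succ]
    ring
  have e3 : (∑ j ∈ range (n + 2), (if j = 0 then 0 else (A (j-1) - r^2 * a (j-1)))
            * μ ^ (j+1) * ν ^ (n + 1 - j))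
      = ∑ j ∈ range (n + 1), (A j - r^2 * a j) * μ ^ (j+2) * ν ^ (n - j) := by
    rw [show (∑ j ∈ range (n + 2), (if j = 0 then 0 else (A (j-1) - r^2 * a (j-1)))
            * μ ^ (j+1) * ν ^ (n + 1 - j))
      = ∑ j ∈ range (n+1), (if j+1 = 0 then 0 else (A (j+1-1) - r^2 * a (j+1-1)))
            * μ ^ (j+1+1) * ν ^ (n + 1 - (j+1))
        + (if (0:ℕ) = 0 then 0 else (A (0-1) - r^2 * a (0-1))) * μ ^ (0+1) * ν ^ (n + 1 - 0)
      from Finset.sum_range_succ' _ (n+1)]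
    norm_num [Nat.succ_sub_succ]
  rw [e1, e3]
  rw [Finset.sum_range_succ (fun j => (2*A j - 2*r*a j) * μ ^ (j+1) * ν ^ (n + 1 - j)) (n+1),
    ha _ (le_refl _), hA _ (le_refl _)]
  ring

theorem stmt5 (ψ : ℕ → ℝ → ℝ → ℝ)
    (h1 : ∀ μ ν : ℝ, ψ 1 μ ν = 1 / (μ + ν))
    (hrec : ∀ k : ℕ, 1 ≤ k → ∀ μ ν : ℝ,
      ψ (k + 1) μ ν = (1 / ((2 : ℝ) ^ k - 1)) * ((2 : ℝ) ^ k * ψ k (μ / 2) ν - ψ k μ ν)) :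
    ∀ k : ℕ, 1 ≤ k → ∃ a : ℕ → ℝ, ∀ μ ν : ℝ, 0 < μ → 0 ≤ ν →
      HasDerivAt (fun m => ψ k m ν)
        (μ ^ (k - 1) * (∑ j ∈ Finset.range k, a j * μ ^ j * ν ^ (k - 1 - j)) /
          ∏ i ∈ Finset.range k, (μ / 2 ^ i + ν) ^ 2) μ := by
  have main : ∀ k : ℕ, 1 ≤ k → ∃ a : ℕ → ℝ, (∀ j, k ≤ j → a j = 0) ∧
      ∀ μ ν : ℝ, 0 < μ → 0 ≤ ν →
      HasDerivAt (fun m => ψ k m ν)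
        (μ ^ (k - 1) * (∑ j ∈ Finset.range k, a j * μ ^ j * ν ^ (k - 1 - j)) /
          ∏ i ∈ Finset.range k, (μ / 2 ^ i + ν) ^ 2) μ := by
    intro k hk
    induction k, hk using Nat.le_induction with
    | base =>
      refine ⟨fun j => if j = 0 then -1 else 0, fun j hj => if_neg (by omega),
        fun μ ν hμ hν => ?_⟩
      have hne : μ + ν ≠ 0 := by positivity
      have hfun : (fun m => ψ 1 m ν) = fun m : ℝ => (m + ν)⁻¹ := by
        funext m; rw [h1 m ν, one_div]
      rw [hfun]
      have h := ((hasDerivAt_id μ).add_const ν).inv hne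
      refine h.congr_deriv ?_
      simp
    | succ n hn ih =>
      obtain ⟨a, haz, hd⟩ := ih
      obtain ⟨n, rfl⟩ : ∃ m, n = m + 1 := ⟨n - 1, by omega⟩
      obtain ⟨b, hbz, hkey⟩ := key_shift n a (fun j => a j / 2 ^ j) ((2 : ℝ) ^ (n+1))⁻¹
        (by simp) (fun j hj => haz j hj) (fun j hj => by simp [haz j hj])
      set c : ℝ := 1 / ((2 : ℝ) ^ (n+1) - 1) with hc
      refine ⟨fun j => c * b j, fun j hj => by simp only [hbz j hj, mul_zero], fun μ ν hμ hν => ?_⟩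
      have hd1 := hd μ ν hμ hν
      have hd2 := hd (μ/2) ν (by positivity) hν
      have hcomp : HasDerivAt (fun m => ψ (n+1) (m/2) ν)
          (((μ/2) ^ (n + 1 - 1) * (∑ j ∈ Finset.range (n+1), a j * (μ/2) ^ j * ν ^ (n + 1 - 1 - j)) /
            ∏ i ∈ Finset.range (n+1), ((μ/2) / 2 ^ i + ν) ^ 2) * (1/2)) μ := by
        have hg : HasDerivAt (fun m : ℝ => m / 2) (1/2) μ := by
          simpa using (hasDerivAt_id μ).div_const 2
        exact HasDerivAt.comp μ hd2 hg
      have hfun : (fun m => ψ (n+1+1) m ν)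
          = fun m => c * ((2:ℝ) ^ (n+1) * ψ (n+1) (m/2) ν - ψ (n+1) m ν) := by
        funext m; rw [hrec (n+1) (by omega) m ν]
      rw [hfun]
      have hder := ((hcomp.const_mul ((2:ℝ) ^ (n+1))).sub hd1).const_mul c
      refine hder.congr_deriv ?_
      symm
      -- now a pure algebra goal
      have hS : ∑ j ∈ Finset.range (n+1), a j * (μ/2) ^ j * ν ^ (n + 1 - 1 - j)
          = ∑ j ∈ Finset.range (n+1), (a j / 2 ^ j) * μ ^ j * ν ^ (n - j) := by
        refine Finset.sum_congr rfl fun j hj => ?_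
        rw [div_pow]; simp only [Nat.add_sub_cancel]; ring
      have hQ : ∏ i ∈ Finset.range (n+1), ((μ/2) / 2 ^ i + ν) ^ 2
          = ∏ i ∈ Finset.range (n+1), (μ / 2 ^ (i+1) + ν) ^ 2 := by
        refine Finset.prod_congr rfl fun i hi => ?_
        rw [pow_succ]; ring_nf
      have hQf1 : ∏ i ∈ Finset.range (n+2), (μ / 2 ^ i + ν) ^ 2
          = (∏ i ∈ Finset.range (n+1), (μ / 2 ^ (i+1) + ν) ^ 2) * (μ + ν) ^ 2 := by
        rw [Finset.prod_range_succ' (fun i => (μ / 2 ^ i + ν) ^ 2) (n+1)]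
        norm_num
      have hQf2 : ∏ i ∈ Finset.range (n+2), (μ / 2 ^ i + ν) ^ 2
          = (∏ i ∈ Finset.range (n+1), (μ / 2 ^ i + ν) ^ 2) * (μ / 2 ^ (n+1) + ν) ^ 2 :=
        Finset.prod_range_succ _ (n+1)
      have hP1pos : (0:ℝ) < ∏ i ∈ Finset.range (n+1), (μ / 2 ^ (i+1) + ν) ^ 2 :=
        Finset.prod_pos fun i _ => by positivity
      have hP0pos : (0:ℝ) < ∏ i ∈ Finset.range (n+1), (μ / 2 ^ i + ν) ^ 2 :=
        Finset.prod_pos fun i _ => by positivity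
      have key2 := hkey μ ν
      rw [inv_mul_eq_div] at key2
      have hSb : ∑ j ∈ Finset.range (n+1+1), (c * b j) * μ ^ j * ν ^ (n+1+1-1-j)
          = c * ∑ j ∈ Finset.range (n+2), b j * μ ^ j * ν ^ (n+1-j) := by
        rw [Finset.mul_sum]
        refine Finset.sum_congr rfl fun j hj => ?_
        rw [show n+1+1-1-j = n+1-j from by omega]
        ring
      have hPP : (∏ i ∈ Finset.range (n+1), (μ / 2 ^ i + ν) ^ 2) * (μ / 2 ^ (n+1) + ν) ^ 2
          = (∏ i ∈ Finset.range (n+1), (μ / 2 ^ (i+1) + ν) ^ 2) * (μ + ν) ^ 2 :=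
        hQf2.symm.trans hQf1
      have hP1 : (∏ i ∈ Finset.range (n+1), (μ / 2 ^ (i+1) + ν) ^ 2) ≠ 0 := ne_of_gt hP1pos
      have hP0 : (∏ i ∈ Finset.range (n+1), (μ / 2 ^ i + ν) ^ 2) ≠ 0 := ne_of_gt hP0pos
      have hμν : μ + ν ≠ 0 := by positivity
      rw [hSb, hQf1, hS, hQ]
      simp only [Nat.add_sub_cancel]
      set SA := ∑ j ∈ Finset.range (n+1), a j / 2 ^ j * μ ^ j * ν ^ (n - j) with hSA
      set Sa := ∑ j ∈ Finset.range (n+1), a j * μ ^ j * ν ^ (n - j) with hSa2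
      set Sb := ∑ j ∈ Finset.range (n+2), b j * μ ^ j * ν ^ (n + 1 - j) with hSb2
      set P1 := ∏ i ∈ Finset.range (n+1), (μ / 2 ^ (i+1) + ν) ^ 2 with hP1d
      set P0 := ∏ i ∈ Finset.range (n+1), (μ / 2 ^ i + ν) ^ 2 with hP0d
      rw [div_eq_iff (by positivity : P1 * (μ + ν)^2 ≠ 0)]
      field_simp
      have h2 : (μ/2)^n * 2^(n+1) = 2 * μ^n := by
        rw [pow_succ, ← mul_assoc, ← mul_pow, div_mul_cancel₀ μ two_ne_zero]; ring
      linear_combination (2 * c * μ^n * P0) * key2 - (2 * c * μ^n * Sa) * hPP - (c * (μ+ν)^2 * SA * P0) * h2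
  intro k hk
  obtain ⟨a, _, h⟩ := main k hk
  exact ⟨a, h⟩
end

section
/- With $\psi_{k,\mu}$ as in the Richardson extrapolation recursion ($\psi_{1,\mu}(\nu) = (\mu+\nu)^{-1}$, $\psi_{k+1,\mu} = \frac{1}{2^k-1}(2^k \psi_{k,\mu/2} - \psi_{k,\mu})$), there is a constant $C_k$ depending only on $k$ such that for all $\mu > 0$ and $\nu \geq 0$: $|\partial_\mu \psi_{k,\mu}(\nu)| \leq C_k \, \mu^{k-1} / (\mu + \nu)^{k+1}$. -/
open Set

noncomputable def Hfun : ℕ → ℕ → ℝ → ℝ → ℝ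
  | 0, j, μ, ν => (-1)^j * (Nat.factorial j) / (μ + ν)^(j+1)
  | (n+1), j, μ, ν => (1/((2:ℝ)^(n+1) - 1)) *
      ((2:ℝ)^(n+1) * (1/2:ℝ)^j * Hfun n j (μ/2) ν - Hfun n j μ ν)

lemma two_pow_sub_one_pos (n : ℕ) : (0:ℝ) < (2:ℝ)^(n+1) - 1 := by
  have h : (2:ℝ)^(n+1) = 2 * 2^n := by ring
  have : (1:ℝ) ≤ (2:ℝ)^n := one_le_pow₀ (by norm_num : (1:ℝ) ≤ 2)
  nlinarith

lemma Hderiv (n : ℕ) : ∀ (j : ℕ) (μ ν : ℝ), 0 ≤ ν → 0 < μ + ν →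
    HasDerivAt (fun m => Hfun n j m ν) (Hfun n (j+1) μ ν) μ := by
  induction n with
  | zero =>
    intro j μ ν hν hp
    have hne : μ + ν ≠ 0 := ne_of_gt hp
    have h1 : HasDerivAt (fun m : ℝ => (m + ν)^(j+1)) (((j:ℝ)+1) * (μ+ν)^j) μ := by
      have := ((hasDerivAt_id μ).add_const ν).pow (j+1)
      simpa [Pi.pow_def] using this
    have h2 := (h1.inv (pow_ne_zero _ hne)).const_mul ((-1:ℝ)^j * (Nat.factorial j))
    simp only [Pi.inv_apply] at h2
    have h3 : HasDerivAt (fun m : ℝ => (-1:ℝ)^j * (Nat.factorial j) * ((m + ν)^(j+1))⁻¹)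
        (Hfun 0 (j+1) μ ν) μ := by
      refine h2.congr_deriv ?_
      symm
      show (-1:ℝ)^(j+1) * (Nat.factorial (j+1)) / (μ + ν)^(j+1+1) = _
      rw [Nat.factorial_succ]
      push_cast
      field_simp
      ring
    have h4 : (fun m : ℝ => (-1:ℝ)^j * (Nat.factorial j) * ((m + ν)^(j+1))⁻¹)
        = fun m => Hfun 0 j m ν := by
      funext m
      show _ = (-1:ℝ)^j * (Nat.factorial j) / (m + ν)^(j+1)
      rw [div_eq_mul_inv]
    rwa [h4] at h3
  | succ n ih =>
    intro j μ ν hν hp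
    have hp2 : 0 < μ/2 + ν := by linarith
    have ha : HasDerivAt (fun m : ℝ => Hfun n j (m/2) ν) (Hfun n (j+1) (μ/2) ν * (2:ℝ)⁻¹) μ := by
      have := HasDerivAt.comp μ (ih j (μ/2) ν hν hp2) ((hasDerivAt_id μ).div_const 2)
      simpa [Function.comp_def, one_div] using this
    have hb := ih j μ ν hν hp
    have h := (((ha.const_mul ((2:ℝ)^(n+1) * (1/2:ℝ)^j)).sub hb).const_mul
      (1/((2:ℝ)^(n+1) - 1)))
    simp only [Pi.sub_apply] at h
    refine h.congr_deriv ?_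
    symm
    show (1/((2:ℝ)^(n+1) - 1)) *
      ((2:ℝ)^(n+1) * (1/2:ℝ)^(j+1) * Hfun n (j+1) (μ/2) ν - Hfun n (j+1) μ ν) = _
    rw [pow_succ]
    ring

lemma Hbound (j n : ℕ) : ∃ C > (0:ℝ), ∀ μ ν : ℝ, 0 ≤ μ → 0 ≤ ν → 0 < μ + ν →
    |Hfun n j μ ν| ≤ C / (μ + ν)^(j+1) := by
  induction n with
  | zero =>
    refine ⟨Nat.factorial j, by positivity, fun μ ν hμ hν hp => ?_⟩
    show |(-1:ℝ)^j * (Nat.factorial j) / (μ + ν)^(j+1)| ≤ _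
    rw [abs_div, abs_mul, abs_pow, abs_neg, abs_one, one_pow, one_mul,
      abs_of_pos (pow_pos hp _),
      abs_of_nonneg (by positivity : (0:ℝ) ≤ ((Nat.factorial j : ℕ) : ℝ))]
  | succ n ih =>
    obtain ⟨C, hC0, hC⟩ := ih
    refine ⟨((2:ℝ)^(n+2) + 1) * C, by positivity, fun μ ν hμ hν hp => ?_⟩
    have hp2 : 0 < μ/2 + ν := by linarith
    have h1 := hC (μ/2) ν (by linarith) hν hp2
    have h2 := hC μ ν hμ hν hp
    have hc := two_pow_sub_one_pos n
    have hkey : |Hfun (n+1) j μ ν| ≤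
        (2:ℝ)^(n+1) * (1/2:ℝ)^j * |Hfun n j (μ/2) ν| + |Hfun n j μ ν| := by
      show |(1/((2:ℝ)^(n+1) - 1)) *
        ((2:ℝ)^(n+1) * (1/2:ℝ)^j * Hfun n j (μ/2) ν - Hfun n j μ ν)| ≤ _
      rw [abs_mul]
      have habs : |(2:ℝ)^(n+1) * (1/2:ℝ)^j * Hfun n j (μ/2) ν - Hfun n j μ ν| ≤
          (2:ℝ)^(n+1) * (1/2:ℝ)^j * |Hfun n j (μ/2) ν| + |Hfun n j μ ν| := by
        refine (abs_sub _ _).trans ?_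
        rw [abs_mul, abs_of_nonneg (by positivity : (0:ℝ) ≤ (2:ℝ)^(n+1) * (1/2:ℝ)^j)]
      have hle1 : |1/((2:ℝ)^(n+1) - 1)| ≤ 1 := by
        rw [abs_of_pos (by positivity), div_le_one hc]
        have h : (2:ℝ)^(n+1) = 2 * 2^n := by ring
        have : (1:ℝ) ≤ (2:ℝ)^n := one_le_pow₀ (by norm_num : (1:ℝ) ≤ 2)
        nlinarith
      calc |1/((2:ℝ)^(n+1) - 1)| * |(2:ℝ)^(n+1) * (1/2:ℝ)^j * Hfun n j (μ/2) ν - Hfun n j μ ν|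
          ≤ 1 * ((2:ℝ)^(n+1) * (1/2:ℝ)^j * |Hfun n j (μ/2) ν| + |Hfun n j μ ν|) :=
            mul_le_mul hle1 habs (abs_nonneg _) (by norm_num)
        _ = _ := one_mul _
    have hCd : C / (μ/2 + ν)^(j+1) ≤ C * 2^(j+1) / (μ+ν)^(j+1) := by
      rw [div_le_div_iff₀ (by positivity) (by positivity)]
      have hple : (μ+ν)^(j+1) ≤ (2*(μ/2+ν))^(j+1) :=
        pow_le_pow_left₀ (by linarith) (by linarith) _
      rw [mul_pow] at hple
      calc C * (μ+ν)^(j+1) ≤ C * (2^(j+1) * (μ/2+ν)^(j+1)) :=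
            mul_le_mul_of_nonneg_left hple hC0.le
        _ = C * 2^(j+1) * (μ/2+ν)^(j+1) := by ring
    have hA : (2:ℝ)^(n+1) * (1/2:ℝ)^j * 2^(j+1) = 2^(n+2) := by
      rw [one_div, inv_pow, pow_succ]
      field_simp
      ring
    calc |Hfun (n+1) j μ ν|
        ≤ (2:ℝ)^(n+1) * (1/2:ℝ)^j * |Hfun n j (μ/2) ν| + |Hfun n j μ ν| := hkey
      _ ≤ (2:ℝ)^(n+1) * (1/2:ℝ)^j * (C / (μ/2+ν)^(j+1)) + C / (μ+ν)^(j+1) := by gcongr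
      _ ≤ (2:ℝ)^(n+1) * (1/2:ℝ)^j * (C * 2^(j+1) / (μ+ν)^(j+1)) + C / (μ+ν)^(j+1) := by gcongr
      _ = ((2:ℝ)^(n+1) * (1/2:ℝ)^j * 2^(j+1) * C + C) / (μ+ν)^(j+1) := by ring
      _ = ((2:ℝ)^(n+2) + 1) * C / (μ+ν)^(j+1) := by rw [hA]; ring

lemma Hzero (n : ℕ) : ∀ j : ℕ, 1 ≤ j → j ≤ n → ∀ ν : ℝ, Hfun n j 0 ν = 0 := by
  induction n with
  | zero => intro j hj1 hj2 ν; omega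
  | succ n ih =>
    intro j hj1 hj2 ν
    show (1/((2:ℝ)^(n+1) - 1)) *
      ((2:ℝ)^(n+1) * (1/2:ℝ)^j * Hfun n j (0/2) ν - Hfun n j 0 ν) = 0
    rw [zero_div]
    rcases Nat.lt_or_ge j (n+1) with h | h
    · rw [ih j hj1 (by omega) ν]
      ring
    · have hj : j = n + 1 := by omega
      subst hj
      have : (2:ℝ)^(n+1) * (1/2:ℝ)^(n+1) = 1 := by
        rw [← mul_pow]; norm_num
      rw [show (2:ℝ)^(n+1) * (1/2:ℝ)^(n+1) * Hfun n (n+1) 0 ν - Hfun n (n+1) 0 ν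
          = ((2:ℝ)^(n+1) * (1/2:ℝ)^(n+1) - 1) * Hfun n (n+1) 0 ν by ring, this]
      ring

lemma Hsmall (n : ℕ) : ∃ C > (0:ℝ), ∀ μ ν : ℝ, 0 ≤ μ → 0 < ν →
    |Hfun n 1 μ ν| ≤ C * μ^n / ν^(n+2) := by
  obtain ⟨C, hC0, hC⟩ := Hbound (n+1) n
  refine ⟨C, hC0, ?_⟩
  have key : ∀ d : ℕ, d ≤ n → ∀ μ ν : ℝ, 0 ≤ μ → 0 < ν →
      |Hfun n (n+1-d) μ ν| ≤ C * μ^d / ν^(n+2) := by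
    intro d
    induction d with
    | zero =>
      intro _ μ ν hμ hν
      simp only [Nat.sub_zero, pow_zero, mul_one]
      have h := hC μ ν hμ hν.le (by linarith)
      refine h.trans ?_
      gcongr
      linarith
    | succ d ihd =>
      intro hd μ ν hμ hν
      have hdn : d ≤ n := by omega
      have hidx : n + 1 - (d+1) = n - d := by omega
      have hidx2 : (n - d) + 1 = n + 1 - d := by omega
      rw [hidx]
      have hzero : Hfun n (n-d) 0 ν = 0 := Hzero n (n-d) (by omega) (by omega) ν
      have hder : ∀ x ∈ Icc (0:ℝ) μ,
          HasDerivWithinAt (fun m => Hfun n (n-d) m ν) (Hfun n ((n-d)+1) x ν) (Icc 0 μ) x := by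
        intro x hx
        exact (Hderiv n (n-d) x ν hν.le (by have := hx.1; linarith)).hasDerivWithinAt
      have hbd : ∀ x ∈ Ico (0:ℝ) μ, ‖Hfun n ((n-d)+1) x ν‖ ≤ C * μ^d / ν^(n+2) := by
        intro x hx
        rw [hidx2]
        refine (ihd hdn x ν hx.1 hν).trans ?_
        gcongr
        exacts [hx.1, hx.2.le]
      have := norm_image_sub_le_of_norm_deriv_le_segment' hder hbd μ (by
        constructor <;> [exact hμ; exact le_refl μ])
      rw [hzero, sub_zero] at this
      calc |Hfun n (n-d) μ ν| ≤ C * μ^d / ν^(n+2) * (μ - 0) := this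
        _ = C * μ^(d+1) / ν^(n+2) := by ring
  have := key n le_rfl
  simpa using this

theorem stmt6 (ψ : ℕ → ℝ → ℝ → ℝ)
    (h1 : ∀ μ ν : ℝ, ψ 1 μ ν = 1 / (μ + ν))
    (hrec : ∀ k : ℕ, 1 ≤ k → ∀ μ ν : ℝ,
      ψ (k + 1) μ ν = (1 / ((2 : ℝ) ^ k - 1)) * ((2 : ℝ) ^ k * ψ k (μ / 2) ν - ψ k μ ν)) :
    ∀ k : ℕ, 1 ≤ k → ∃ C > (0 : ℝ), ∀ μ ν : ℝ, 0 < μ → 0 ≤ ν →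
      |deriv (fun m => ψ k m ν) μ| ≤ C * μ ^ (k - 1) / (μ + ν) ^ (k + 1) := by
  have hpsi : ∀ k : ℕ, 1 ≤ k → ∀ μ ν : ℝ, ψ k μ ν = Hfun (k-1) 0 μ ν := by
    intro k hk
    induction k, hk using Nat.le_induction with
    | base =>
      intro μ ν
      rw [h1]
      show _ = (-1:ℝ)^0 * (Nat.factorial 0) / (μ+ν)^(0+1)
      norm_num
    | succ k hk ih =>
      intro μ ν
      rw [hrec k hk μ ν, ih, ih]
      obtain ⟨m, rfl⟩ : ∃ m, k = m + 1 := ⟨k-1, by omega⟩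
      show _ = (1/((2:ℝ)^(m+1) - 1)) *
        ((2:ℝ)^(m+1) * (1/2:ℝ)^0 * Hfun m 0 (μ/2) ν - Hfun m 0 μ ν)
      norm_num
  intro k hk
  obtain ⟨n, rfl⟩ : ∃ n, k = n + 1 := ⟨k-1, by omega⟩
  obtain ⟨C1, hC10, hC1⟩ := Hbound 1 n
  obtain ⟨C2, hC20, hC2⟩ := Hsmall n
  refine ⟨2^(n+2) * (C1 + C2), by positivity, fun μ ν hμ hν => ?_⟩
  have hp : 0 < μ + ν := by linarith
  have hD : deriv (fun m => ψ (n+1) m ν) μ = Hfun n 1 μ ν := by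
    have hfeq : (fun m => ψ (n+1) m ν) = fun m => Hfun n 0 m ν := by
      funext m
      rw [hpsi (n+1) (by omega) m ν]
      simp
    rw [hfeq]
    exact (Hderiv n 0 μ ν hν hp).deriv
  rw [hD, show n + 1 - 1 = n from rfl]
  rcases le_total μ ν with hcase | hcase
  · have hν' : 0 < ν := lt_of_lt_of_le hμ hcase
    refine (hC2 μ ν hμ.le hν').trans ?_
    rw [div_le_div_iff₀ (by positivity) (by positivity)]
    have hple : (μ+ν)^(n+2) ≤ (2*ν)^(n+2) :=
      pow_le_pow_left₀ (by linarith) (by linarith) _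
    rw [mul_pow] at hple
    calc C2 * μ^n * (μ+ν)^(n+1+1) = C2 * μ^n * (μ+ν)^(n+2) := by norm_num
      _ ≤ C2 * μ^n * (2^(n+2) * ν^(n+2)) := by gcongr
      _ = 2^(n+2) * C2 * μ^n * ν^(n+2) := by ring
      _ ≤ 2^(n+2) * (C1+C2) * μ^n * ν^(n+2) := by gcongr <;> linarith
  · refine (hC1 μ ν hμ.le hν hp).trans ?_
    rw [div_le_div_iff₀ (by positivity) (by positivity)]
    have hple : (μ+ν)^n ≤ (2*μ)^n := pow_le_pow_left₀ (by linarith) (by linarith) n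
    rw [mul_pow] at hple
    calc C1 * (μ+ν)^(n+1+1) = C1 * (μ+ν)^n * (μ+ν)^2 := by ring
      _ ≤ C1 * (2^n * μ^n) * (μ+ν)^2 := by gcongr
      _ = 2^n * C1 * μ^n * (μ+ν)^2 := by ring
      _ ≤ 2^(n+2) * (C1+C2) * μ^n * (μ+ν)^(1+1) := by
          rw [show ((μ+ν):ℝ)^(1+1) = (μ+ν)^2 from by norm_num]
          have h2n : (2:ℝ)^n ≤ 2^(n+2) := by
            have : (2:ℝ)^(n+2) = 4 * 2^n := by ring
            nlinarith [pow_pos (show (0:ℝ) < 2 by norm_num) n]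
          gcongr <;> first | linarith | positivity
end

section
/- For $d \geq 1$ there exists $C > 0$ (depending on $d$ and $c$) such that for all $\mu \in (0, 1/2]$: $\sum_{x \in \mathbb{Z}^d} \frac{e^{-c\sqrt{\mu}|x|}}{1 + |x|^d} \leq C (1 + |\log \mu|)$. -/
open Real ENNReal

/-- The sup norm of a lattice point, as a real number. -/
noncomputable def supNorm {d : ℕ} (x : Fin d → ℤ) : ℝ :=
  ((Finset.univ.sup fun i => (x i).natAbs : ℕ) : ℝ)

lemma pow_succ_sub_le (d : ℕ) : ∀ a b : ℝ, 0 ≤ b → b ≤ a →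
    a ^ (d + 1) - b ^ (d + 1) ≤ (d + 1) * (a - b) * a ^ d := by
  induction d with
  | zero => intro a b hb hba; simp
  | succ d ih =>
    intro a b hb hba
    have ha : 0 ≤ a := hb.trans hba
    have h1 := ih a b hb hba
    have h2 : b ^ (d + 1) ≤ a ^ (d + 1) := pow_le_pow_left₀ hb hba _
    have h3 : a ^ (d + 1 + 1) - b ^ (d + 1 + 1)
        = a * (a ^ (d + 1) - b ^ (d + 1)) + (a - b) * b ^ (d + 1) := by ring
    have h4 : (a - b) * b ^ (d + 1) ≤ (a - b) * a ^ (d + 1) :=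
      mul_le_mul_of_nonneg_left h2 (by linarith)
    have h5 : a * (a ^ (d + 1) - b ^ (d + 1)) ≤ a * ((d + 1) * (a - b) * a ^ d) :=
      mul_le_mul_of_nonneg_left h1 ha
    have h6 : a * ((↑d + 1) * (a - b) * a ^ d) = (↑d + 1) * (a - b) * a ^ (d + 1) := by ring
    have h7 : ((↑(d+1):ℝ) + 1) * (a - b) * a ^ (d + 1)
        = (↑d + 1) * (a - b) * a ^ (d + 1) + (a - b) * a ^ (d + 1) := by push_cast; ring
    linarith [h3, h4, h5, h6, h7]

lemma aux_alg (K S M L : ℝ) (hK : 0 ≤ K) (hM : 0 ≤ M) (hL : 0 ≤ L)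
    (hS : S ≤ M + L/2) : 1 + K*S ≤ (1 + K*(M+1))*(1+L) := by
  nlinarith [mul_nonneg hK hL, mul_nonneg (mul_nonneg hK hL) hM, mul_nonneg hK hM]

set_option maxHeartbeats 1000000 in
theorem stmt10 (d : ℕ) (hd : 1 ≤ d) (c : ℝ) (hc : 0 < c) :
    ∃ C > (0 : ℝ), ∀ μ : ℝ, 0 < μ → μ ≤ 1 / 2 →
      (∑' x : Fin d → ℤ,
          Real.exp (-c * Real.sqrt μ * supNorm x) / (1 + supNorm x ^ d))
        ≤ C * (1 + |Real.log μ|) := by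
  classical
  obtain ⟨e, rfl⟩ : ∃ e, d = e + 1 := ⟨d - 1, by omega⟩
  set K : ℝ := (2 * ((e:ℝ)+1)) * 3 ^ e with hK
  have hKpos : 0 < K := by positivity
  set C : ℝ := 1 + K * (c + |Real.log c| + 1) with hC
  have hCpos : 0 < C := by positivity
  refine ⟨C, hCpos, ?_⟩
  intro μ hμ hμ2
  set a : ℝ := c * Real.sqrt μ with haa
  have hsq : 0 < Real.sqrt μ := Real.sqrt_pos.mpr hμ
  have ha : 0 < a := mul_pos hc hsq
  set x : ℝ := Real.exp (-a) with hxx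
  have hx0 : 0 < x := Real.exp_pos _
  have hx1 : x < 1 := Real.exp_lt_one_iff.mpr (by linarith)
  -- the integer-valued sup norm
  set N : (Fin (e+1) → ℤ) → ℕ := fun v => Finset.univ.sup fun i => (v i).natAbs with hN
  have hsupN : ∀ v : Fin (e+1) → ℤ, supNorm v = (N v : ℝ) := fun v => rfl
  -- the real summand
  set f : (Fin (e+1) → ℤ) → ℝ := fun v =>
    Real.exp (-c * Real.sqrt μ * supNorm v) / (1 + supNorm v ^ (e+1)) with hf
  have hfnn : ∀ v, 0 ≤ f v := by
    intro v
    have : (0:ℝ) ≤ supNorm v := by rw [hsupN]; positivity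
    have h1 : (0:ℝ) < 1 + supNorm v ^ (e+1) := by positivity
    exact div_nonneg (Real.exp_nonneg _) h1.le
  set F : (Fin (e+1) → ℤ) → ℝ≥0∞ := fun v => ENNReal.ofReal (f v) with hF
  -- value of f on the fiber
  set cn : ℕ → ℝ := fun n => x ^ n / (1 + (n:ℝ) ^ (e+1)) with hcn
  have hcnnn : ∀ n, 0 ≤ cn n := by
    intro n; have : (0:ℝ) ≤ (n:ℝ) := n.cast_nonneg; positivity
  have hfib : ∀ v, f v = cn (N v) := by
    intro v
    rw [hf, hcn]
    simp only [hsupN]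
    congr 1
    rw [show -c * Real.sqrt μ * (N v : ℝ) = (N v : ℝ) * (-a) by rw [haa]; ring,
      Real.exp_nat_mul, hxx]
  -- boxes
  set B : ℕ → Finset (Fin (e+1) → ℤ) := fun n =>
    Fintype.piFinset fun _ => Finset.Icc (-(n:ℤ)) (n:ℤ) with hB
  have hBcard : ∀ n, (B n).card = (2 * n + 1) ^ (e+1) := by
    intro n
    rw [hB]
    simp only [Fintype.card_piFinset, Int.card_Icc]
    rw [Finset.prod_const]
    congr 1
    · omega
    · simp
  have hmemB : ∀ (v) (n), N v = n → v ∈ B n := by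
    intro v n hv
    rw [hB]
    simp only [Fintype.mem_piFinset, Finset.mem_Icc]
    intro i
    have : (v i).natAbs ≤ n := by
      rw [← hv]
      exact Finset.le_sup (f := fun i => (v i).natAbs) (Finset.mem_univ i)
    omega
  have hnotB : ∀ (v) (n), 1 ≤ n → N v = n → v ∉ B (n - 1) := by
    intro v n hn hv hmem
    haveI : Nonempty (Fin (e+1)) := ⟨⟨0, by omega⟩⟩
    obtain ⟨i, -, hi⟩ := Finset.exists_mem_eq_sup (Finset.univ : Finset (Fin (e+1)))
      Finset.univ_nonempty fun i => (v i).natAbs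
    rw [hB] at hmem
    simp only [Fintype.mem_piFinset, Finset.mem_Icc] at hmem
    have h2 := hmem i
    have : (v i).natAbs = n := by rw [← hi]; exact hv
    omega
  -- fibers as finsets
  set S : ℕ → Finset (Fin (e+1) → ℤ) := fun n => (B n).filter (fun v => N v = n) with hSdef
  have hSiff : ∀ n (v : Fin (e+1) → ℤ), v ∈ S n ↔ N v = n := by
    intro n v
    rw [hSdef]
    simp only [Finset.mem_filter]
    exact ⟨fun h => h.2, fun h => ⟨hmemB v n h, h⟩⟩
  haveI hft : ∀ n : ℕ, Fintype {v : Fin (e+1) → ℤ // N v = n} :=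
    fun n => Fintype.subtype (S n) (hSiff n)
  -- per-fiber sums
  have hT : ∀ n : ℕ, (∑' v : {v : Fin (e+1) → ℤ // N v = n}, F v.1)
      = ((S n).card : ℝ≥0∞) * ENNReal.ofReal (cn n) := by
    intro n
    rw [tsum_fintype]
    have hconst : ∀ v : {v : Fin (e+1) → ℤ // N v = n}, F v.1 = ENNReal.ofReal (cn n) := by
      rintro ⟨v, hv⟩
      simp only [hF, hfib v, hv]
    rw [Finset.sum_congr rfl (fun v _ => hconst v), Finset.sum_const,
      ← Fintype.card_of_subtype (S n) (hSiff n)]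
    simp [Finset.card_univ, nsmul_eq_mul]
  -- cardinality bounds
  have hcard0 : (S 0).card ≤ 1 := by
    calc (S 0).card ≤ (B 0).card := Finset.card_filter_le _ _
    _ = 1 := by rw [hBcard]; norm_num
  have hBmono : ∀ n : ℕ, 1 ≤ n → B (n-1) ⊆ B n := by
    intro n hn
    rw [hB]
    apply Fintype.piFinset_subset
    intro i
    apply Finset.Icc_subset_Icc <;> omega
  have hcardn : ∀ n : ℕ, 1 ≤ n → (S n).card ≤ (2*n+1)^(e+1) - (2*(n-1)+1)^(e+1) := by
    intro n hn
    have hsub : S n ⊆ B n \ B (n-1) := by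
      intro v hv
      rw [hSiff] at hv
      rw [Finset.mem_sdiff]
      exact ⟨hmemB v n hv, hnotB v n hn hv⟩
    calc (S n).card ≤ (B n \ B (n-1)).card := Finset.card_le_card hsub
    _ = (B n).card - (B (n-1)).card := Finset.card_sdiff_of_subset (hBmono n hn)
    _ = (2*n+1)^(e+1) - (2*(n-1)+1)^(e+1) := by rw [hBcard, hBcard]
  -- real cardinality bound
  have hcardR : ∀ n : ℕ, 1 ≤ n → ((S n).card : ℝ) ≤ K * (n:ℝ)^e := by
    intro n hn
    obtain ⟨m, rfl⟩ : ∃ m, n = m + 1 := ⟨n - 1, by omega⟩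
    have hple : (2*((m+1)-1)+1)^(e+1) ≤ (2*(m+1)+1)^(e+1) := Nat.pow_le_pow_left (by omega) _
    have h1 : ((S (m+1)).card : ℝ)
        ≤ ((2*(m+1)+1:ℕ):ℝ)^(e+1) - ((2*((m+1)-1)+1:ℕ):ℝ)^(e+1) := by
      have h0 := hcardn (m+1) (by omega)
      have h2 : (((2*(m+1)+1)^(e+1) - (2*((m+1)-1)+1)^(e+1) : ℕ) : ℝ)
          = ((2*(m+1)+1:ℕ):ℝ)^(e+1) - ((2*((m+1)-1)+1:ℕ):ℝ)^(e+1) := by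
        rw [Nat.cast_sub hple]; push_cast; ring
      calc ((S (m+1)).card : ℝ)
          ≤ (((2*(m+1)+1)^(e+1) - (2*((m+1)-1)+1)^(e+1) : ℕ) : ℝ) := by exact_mod_cast h0
      _ = _ := h2
    have hA : ((2*((m+1)-1)+1:ℕ):ℝ) ≤ ((2*(m+1)+1:ℕ):ℝ) := by
      have : (2*((m+1)-1)+1:ℕ) ≤ 2*(m+1)+1 := by omega
      exact_mod_cast this
    have h3 := pow_succ_sub_le e ((2*(m+1)+1:ℕ):ℝ) ((2*((m+1)-1)+1:ℕ):ℝ) (by positivity) hA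
    have hA3 : ((2*(m+1)+1:ℕ):ℝ) ≤ 3*(((m+1):ℕ):ℝ) := by push_cast; linarith
    have hpow : ((2*(m+1)+1:ℕ):ℝ)^e ≤ (3*(((m+1):ℕ):ℝ))^e :=
      pow_le_pow_left₀ (by positivity) hA3 e
    have hdiff : ((2*(m+1)+1:ℕ):ℝ) - ((2*((m+1)-1)+1:ℕ):ℝ) = 2 := by
      have h9 : (2*((m+1)-1)+1:ℕ) = 2*m+1 := by omega
      rw [h9]; push_cast; ring
    have h5 : ((e:ℝ)+1) * (((2*(m+1)+1:ℕ):ℝ) - ((2*((m+1)-1)+1:ℕ):ℝ)) * ((2*(m+1)+1:ℕ):ℝ)^e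
        ≤ K * (((m+1):ℕ):ℝ)^e := by
      rw [hdiff]
      calc ((e:ℝ)+1) * 2 * ((2*(m+1)+1:ℕ):ℝ)^e
          ≤ ((e:ℝ)+1) * 2 * (3*(((m+1):ℕ):ℝ))^e :=
            mul_le_mul_of_nonneg_left hpow (by positivity)
      _ = K * (((m+1):ℕ):ℝ)^e := by rw [hK, mul_pow]; push_cast; ring
    calc ((S (m+1)).card : ℝ)
        ≤ ((2*(m+1)+1:ℕ):ℝ)^(e+1) - ((2*((m+1)-1)+1:ℕ):ℝ)^(e+1) := h1
    _ ≤ ((e:ℝ)+1) * (((2*(m+1)+1:ℕ):ℝ) - ((2*((m+1)-1)+1:ℕ):ℝ)) * ((2*(m+1)+1:ℕ):ℝ)^e := by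
        exact_mod_cast h3
    _ ≤ K * (((m+1):ℕ):ℝ)^e := h5
  -- the comparison sequence g
  set g : ℕ → ℝ := fun n => if n = 0 then 1 else K * (x ^ n / n) with hg
  have hgnn : ∀ n, 0 ≤ g n := by
    intro n
    rw [hg]
    dsimp only
    split
    · norm_num
    · have : (0:ℝ) ≤ (n:ℝ) := n.cast_nonneg
      positivity
  have hSsum : HasSum (fun n : ℕ => x ^ (n+1) / ((n:ℝ)+1)) (-Real.log (1 - x)) :=
    Real.hasSum_pow_div_log_of_abs_lt_one (by rw [abs_of_pos hx0]; exact hx1)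
  have hgsum : HasSum g (1 + K * -Real.log (1 - x)) := by
    refine (hasSum_nat_add_iff' 1).mp ?_
    have h2 := hSsum.mul_left K
    have h3 : (fun n : ℕ => g (n+1)) = fun n : ℕ => K * (x ^ (n+1) / ((n:ℝ)+1)) := by
      funext n
      rw [hg]
      simp only [Nat.succ_ne_zero, if_false]
      push_cast
      ring
    rw [h3]
    have h4 : ∑ i ∈ Finset.range 1, g i = 1 := by simp [hg]
    rw [h4]
    convert h2 using 1
    · rfl
    ring
  -- per-n bound
  have hTg : ∀ n : ℕ, (∑' v : {v : Fin (e+1) → ℤ // N v = n}, F v.1)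
      ≤ ENNReal.ofReal (g n) := by
    intro n
    rw [hT n]
    rcases Nat.eq_zero_or_pos n with rfl | hn
    · have hc0 : cn 0 = 1 := by rw [hcn]; norm_num
      have hle1 : ((S 0).card : ℝ≥0∞) ≤ 1 := by exact_mod_cast hcard0
      calc ((S 0).card : ℝ≥0∞) * ENNReal.ofReal (cn 0)
          ≤ 1 * ENNReal.ofReal (cn 0) := mul_le_mul_of_nonneg_right hle1 (by positivity)
      _ = ENNReal.ofReal (g 0) := by rw [one_mul, hc0, hg]; norm_num
    · have h1 : ((S n).card : ℝ≥0∞) = ENNReal.ofReal ((S n).card : ℝ) := by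
        rw [ENNReal.ofReal_natCast]
      rw [h1, ← ENNReal.ofReal_mul (by positivity)]
      apply ENNReal.ofReal_le_ofReal
      have hcr := hcardR n hn
      have hcnn := hcnnn n
      have hng : g n = K * (x ^ n / n) := by
        rw [hg]; simp [Nat.pos_iff_ne_zero.mp hn]
      rw [hng]
      have hn1 : (1:ℝ) ≤ (n:ℝ) := by exact_mod_cast hn
      have hkey : (n:ℝ)^e * cn n ≤ x ^ n / n := by
        rw [hcn]
        dsimp only
        have hd1 : (0:ℝ) < 1 + (n:ℝ)^(e+1) := by positivity
        have heq : (n:ℝ)^e * (x ^ n / (1 + (n:ℝ)^(e+1)))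
            = (n:ℝ)^e * x ^ n / (1 + (n:ℝ)^(e+1)) := by ring
        rw [heq, div_le_div_iff₀ hd1 (by linarith)]
        have hp : (n:ℝ)^e * (n:ℝ) = (n:ℝ)^(e+1) := (pow_succ _ _).symm
        nlinarith [pow_nonneg hx0.le n, hp]
      calc ((S n).card : ℝ) * cn n
          ≤ (K * (n:ℝ)^e) * cn n := mul_le_mul_of_nonneg_right hcr hcnn
      _ = K * ((n:ℝ)^e * cn n) := by ring
      _ ≤ K * (x ^ n / n) := mul_le_mul_of_nonneg_left hkey hKpos.le
  -- sigma decomposition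
  have hsigma : (∑' v : Fin (e+1) → ℤ, F v)
      = ∑' n : ℕ, ∑' v : {v : Fin (e+1) → ℤ // N v = n}, F v.1 := by
    rw [← ENNReal.tsum_sigma'
      (fun p : (Σ n : ℕ, {v : Fin (e+1) → ℤ // N v = n}) => F p.2.1)]
    exact ((Equiv.sigmaFiberEquiv N).tsum_eq F).symm
  -- the log bound
  have h1x : 0 < 1 - x := by linarith
  have hxe : x * Real.exp a = 1 := by rw [hxx, ← Real.exp_add]; simp
  have hax : a * x ≤ 1 - x := by
    nlinarith [mul_le_mul_of_nonneg_right (Real.add_one_le_exp a) hx0.le, hxe]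
  have hll : Real.log (a * x) ≤ Real.log (1 - x) := Real.log_le_log (by positivity) hax
  have hlax : Real.log (a * x) = Real.log a - a := by
    rw [Real.log_mul ha.ne' hx0.ne', hxx, Real.log_exp]; ring
  have hla : Real.log a = Real.log c + Real.log μ / 2 := by
    rw [haa, Real.log_mul hc.ne' hsq.ne', Real.log_sqrt hμ.le]
  have hac : a ≤ c := by
    have h1 : Real.sqrt μ ≤ 1 := by
      rw [show (1:ℝ) = Real.sqrt 1 by simp]
      exact Real.sqrt_le_sqrt (by linarith)
    calc a = c * Real.sqrt μ := rfl
    _ ≤ c * 1 := mul_le_mul_of_nonneg_left h1 hc.le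
    _ = c := mul_one c
  have hmid : -Real.log (1 - x) ≤ c + |Real.log c| + |Real.log μ| / 2 := by
    have hlc := neg_le_abs (Real.log c)
    have hlm := neg_le_abs (Real.log μ)
    linarith
  have hlogbound : 1 + K * -Real.log (1 - x) ≤ C * (1 + |Real.log μ|) := by
    have h2 := aux_alg K (-Real.log (1 - x)) (c + |Real.log c|) (|Real.log μ|)
      hKpos.le (by positivity) (abs_nonneg _) (by linarith [hmid])
    have hCeq : C * (1 + |Real.log μ|)
        = (1 + K*((c + |Real.log c|)+1))*(1+|Real.log μ|) := by rw [hC]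
    rw [hCeq]
    exact h2
  -- overall ENNReal bound
  have hbound : (∑' v : Fin (e+1) → ℤ, F v)
      ≤ ENNReal.ofReal (C * (1 + |Real.log μ|)) := by
    rw [hsigma]
    calc (∑' n : ℕ, ∑' v : {v : Fin (e+1) → ℤ // N v = n}, F v.1)
        ≤ ∑' n : ℕ, ENNReal.ofReal (g n) := ENNReal.tsum_le_tsum hTg
    _ = ENNReal.ofReal (∑' n, g n) :=
        (ENNReal.ofReal_tsum_of_nonneg hgnn hgsum.summable).symm
    _ ≤ ENNReal.ofReal (C * (1 + |Real.log μ|)) := by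
        apply ENNReal.ofReal_le_ofReal
        rw [hgsum.tsum_eq]
        exact hlogbound
  -- conversion to the real-valued sum
  have hconv : (∑' v : Fin (e+1) → ℤ, f v) = (∑' v : Fin (e+1) → ℤ, F v).toReal := by
    rw [ENNReal.tsum_toReal_eq (fun v => ENNReal.ofReal_ne_top)]
    exact tsum_congr fun v => (ENNReal.toReal_ofReal (hfnn v)).symm
  have hfinal : (∑' v : Fin (e+1) → ℤ, f v) ≤ C * (1 + |Real.log μ|) := by
    rw [hconv]
    calc (∑' v : Fin (e+1) → ℤ, F v).toReal
        ≤ (ENNReal.ofReal (C * (1 + |Real.log μ|))).toReal :=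
          ENNReal.toReal_mono ENNReal.ofReal_ne_top hbound
    _ = C * (1 + |Real.log μ|) :=
        ENNReal.toReal_ofReal (mul_nonneg hCpos.le (by positivity))
  exact hfinal
end
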